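/- Let W₁, W₂, T be symmetric positive definite real n×n matrices and α ≥ 1 a real parameter. Then the iteration matrix of Method III, B = (αT - iW₁)^{-1}((α-1)T - iW₂)(αT + iW₂)^{-1}((α-1)T + iW₁), satisfies ‖B‖-type eigenvalue bound: every eigenvalue λ of B obeys |λ| ≤ sqrt( ((α-1)² + ‖Ŵ₂‖²)/(α² + ‖Ŵ₂‖²) ) · sqrt( ((α-1)² + ‖Ŵ₁‖²)/(α² + ‖Ŵ₁‖²) ) < 1, where Ŵⱼ = T^{-1/2} Wⱼ T^{-1/2}. -/

import Mathlib

open scoped Matrix.Norms.L2Operator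

/-- complexification of a real matrix -/
def Matrix.cplx {n : ℕ} (A : Matrix (Fin n) (Fin n) ℝ) : Matrix (Fin n) (Fin n) ℂ :=
  A.map Complex.ofReal

/-- `Ŵ = T^{-1/2} W T^{-1/2}` -/
noncomputable def Matrix.hatW {n : ℕ} (T : Matrix (Fin n) (Fin n) ℝ) (hT : T.PosDef)
    (W : Matrix (Fin n) (Fin n) ℝ) : Matrix (Fin n) (Fin n) ℝ :=
  (hT.posSemidef.1.eigenvectorUnitary.1 *
      Matrix.diagonal ((RCLike.ofReal : ℝ → ℝ) ∘ Real.sqrt ∘ hT.posSemidef.1.eigenvalues) *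
      (star hT.posSemidef.1.eigenvectorUnitary : Matrix (Fin n) (Fin n) ℝ))⁻¹ * W *
    (hT.posSemidef.1.eigenvectorUnitary.1 *
      Matrix.diagonal ((RCLike.ofReal : ℝ → ℝ) ∘ Real.sqrt ∘ hT.posSemidef.1.eigenvalues) *
      (star hT.posSemidef.1.eigenvectorUnitary : Matrix (Fin n) (Fin n) ℝ))⁻¹

namespace Stmt7Aux

open Matrix Complex

variable {n : ℕ}

lemma cplx_mul (A B : Matrix (Fin n) (Fin n) ℝ) : (A * B).cplx = A.cplx * B.cplx :=
  Matrix.map_mul (f := Complex.ofRealHom)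

lemma ratio_le {α x w : ℝ} (hα : 1 ≤ α) (hx : x ^ 2 ≤ w ^ 2) :
    ((α - 1) ^ 2 + x ^ 2) / (α ^ 2 + x ^ 2) ≤ ((α - 1) ^ 2 + w ^ 2) / (α ^ 2 + w ^ 2) := by
  have h1 : 0 < α ^ 2 + x ^ 2 := by nlinarith [sq_nonneg x]
  have h2 : 0 < α ^ 2 + w ^ 2 := by nlinarith [sq_nonneg w]
  rw [div_le_div_iff₀ h1 h2]
  nlinarith [sq_nonneg x, sq_nonneg w]

lemma ratio_nonneg {α w : ℝ} : 0 ≤ ((α - 1) ^ 2 + w ^ 2) / (α ^ 2 + w ^ 2) := by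
  positivity

lemma ratio_lt_one {α w : ℝ} (hα : 1 ≤ α) :
    ((α - 1) ^ 2 + w ^ 2) / (α ^ 2 + w ^ 2) < 1 := by
  have h2 : 0 < α ^ 2 + w ^ 2 := by nlinarith [sq_nonneg w]
  rw [div_lt_one h2]
  nlinarith

/-- part 2 of the statement -/
lemma bound_lt_one {α w₁ w₂ : ℝ} (hα : 1 ≤ α) :
    Real.sqrt (((α - 1) ^ 2 + w₂ ^ 2) / (α ^ 2 + w₂ ^ 2)) *
      Real.sqrt (((α - 1) ^ 2 + w₁ ^ 2) / (α ^ 2 + w₁ ^ 2)) < 1 := by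
  have h2 : Real.sqrt (((α - 1) ^ 2 + w₂ ^ 2) / (α ^ 2 + w₂ ^ 2)) < 1 := by
    have := Real.sqrt_lt_sqrt ratio_nonneg (ratio_lt_one (w := w₂) hα)
    simpa using this
  have h1 : Real.sqrt (((α - 1) ^ 2 + w₁ ^ 2) / (α ^ 2 + w₁ ^ 2)) < 1 := by
    have := Real.sqrt_lt_sqrt ratio_nonneg (ratio_lt_one (w := w₁) hα)
    simpa using this
  nlinarith [Real.sqrt_nonneg (((α - 1) ^ 2 + w₂ ^ 2) / (α ^ 2 + w₂ ^ 2)),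
    Real.sqrt_nonneg (((α - 1) ^ 2 + w₁ ^ 2) / (α ^ 2 + w₁ ^ 2))]

/-- the complexification has no larger L2 operator norm -/
lemma norm_cplx_le (A : Matrix (Fin n) (Fin n) ℝ) : ‖A.cplx‖ ≤ ‖A‖ := by
  rw [Matrix.l2_opNorm_def]
  refine ContinuousLinearMap.opNorm_le_bound _ (norm_nonneg A) fun x => ?_
  show ‖toEuclideanCLM (𝕜 := ℂ) A.cplx x‖ ≤ ‖A‖ * ‖x‖
  set u : EuclideanSpace ℝ (Fin n) := WithLp.toLp 2 (fun j => (x j).re) with hu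
  set v : EuclideanSpace ℝ (Fin n) := WithLp.toLp 2 (fun j => (x j).im) with hv
  set eu : EuclideanSpace ℝ (Fin n) := (EuclideanSpace.equiv (Fin n) ℝ).symm (A *ᵥ u) with heu
  set ev : EuclideanSpace ℝ (Fin n) := (EuclideanSpace.equiv (Fin n) ℝ).symm (A *ᵥ v) with hev
  have hAu := Matrix.l2_opNorm_mulVec A u
  have hAv := Matrix.l2_opNorm_mulVec A v
  have hnormsq : ∀ (y : EuclideanSpace ℝ (Fin n)), ‖y‖^2 = ∑ i, (y i)^2 := by
    intro y
    rw [EuclideanSpace.norm_eq, Real.sq_sqrt (by positivity)]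
    simp [Real.norm_eq_abs, sq_abs]
  have hxsq : ‖x‖^2 = (∑ j, (u j)^2) + ∑ j, (v j)^2 := by
    rw [EuclideanSpace.norm_eq, Real.sq_sqrt (by positivity), ← Finset.sum_add_distrib]
    refine Finset.sum_congr rfl fun j _ => ?_
    rw [Complex.sq_norm, Complex.normSq_apply]
    simp [hu, hv, sq]
  have hY : ‖toEuclideanCLM (𝕜 := ℂ) A.cplx x‖^2
      = (∑ i, ((A *ᵥ u) i)^2) + ∑ i, ((A *ᵥ v) i)^2 := by
    rw [EuclideanSpace.norm_eq, Real.sq_sqrt (by positivity), ← Finset.sum_add_distrib]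
    refine Finset.sum_congr rfl fun i _ => ?_
    have hyi : toEuclideanCLM (𝕜 := ℂ) A.cplx x i = (A.cplx *ᵥ fun j => x j) i := rfl
    rw [hyi, Complex.sq_norm, Complex.normSq_apply]
    have hre : ((A.cplx *ᵥ fun j => x j) i).re = (A *ᵥ u) i := by
      simp [Matrix.mulVec, dotProduct, Matrix.cplx, Complex.re_sum, hu]
    have him : ((A.cplx *ᵥ fun j => x j) i).im = (A *ᵥ v) i := by
      simp [Matrix.mulVec, dotProduct, Matrix.cplx, Complex.im_sum, hv]
    rw [hre, him]; ring
  have h1 : ∑ i, ((A *ᵥ u) i)^2 = ‖eu‖^2 := by rw [hnormsq eu]; rfl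
  have h2 : ∑ i, ((A *ᵥ v) i)^2 = ‖ev‖^2 := by rw [hnormsq ev]; rfl
  have husq : ‖u‖^2 = ∑ j, (u j)^2 := hnormsq u
  have hvsq : ‖v‖^2 = ∑ j, (v j)^2 := hnormsq v
  have e1 : ‖eu‖^2 ≤ ‖A‖^2 * ‖u‖^2 := by
    nlinarith [hAu, norm_nonneg eu, mul_nonneg (norm_nonneg A) (norm_nonneg u)]
  have e2 : ‖ev‖^2 ≤ ‖A‖^2 * ‖v‖^2 := by
    nlinarith [hAv, norm_nonneg ev, mul_nonneg (norm_nonneg A) (norm_nonneg v)]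
  have hfin : ‖toEuclideanCLM (𝕜 := ℂ) A.cplx x‖^2 ≤ (‖A‖ * ‖x‖)^2 := by
    have hx2 : (‖A‖ * ‖x‖)^2 = ‖A‖^2 * ‖u‖^2 + ‖A‖^2 * ‖v‖^2 := by
      rw [mul_pow, hxsq, ← husq, ← hvsq]; ring
    rw [hY, h1, h2, hx2]
    linarith
  nlinarith [norm_nonneg (toEuclideanCLM (𝕜 := ℂ) A.cplx x),
    mul_nonneg (norm_nonneg A) (norm_nonneg x)]

/-- key factor lemma -/
lemma factor (H : Matrix (Fin n) (Fin n) ℂ) (hH : IsSelfAdjoint H)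
    (α w : ℝ) (hα : 1 ≤ α) (hw : ‖H‖ ≤ w) (ε : ℂ) (hε : ε = Complex.I ∨ ε = -Complex.I) :
    IsUnit ((α : ℂ) • (1 : Matrix (Fin n) (Fin n) ℂ) - ε • H) ∧
    ‖(((α : ℂ) - 1) • (1 : Matrix (Fin n) (Fin n) ℂ) + ε • H) *
        ((α : ℂ) • (1 : Matrix (Fin n) (Fin n) ℂ) - ε • H)⁻¹‖ ≤
      Real.sqrt (((α - 1) ^ 2 + w ^ 2) / (α ^ 2 + w ^ 2)) := by
  have hw0 : 0 ≤ w := le_trans (norm_nonneg H) hw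
  haveI hnormal : IsStarNormal H := hH.isStarNormal
  rcases subsingleton_or_nontrivial (Matrix (Fin n) (Fin n) ℂ) with hsub | hnt
  · refine ⟨isUnit_of_subsingleton _, ?_⟩
    rw [Subsingleton.elim ((((α : ℂ) - 1) • (1 : Matrix (Fin n) (Fin n) ℂ) + ε • H) *
        ((α : ℂ) • (1 : Matrix (Fin n) (Fin n) ℂ) - ε • H)⁻¹) 0, norm_zero]
    exact Real.sqrt_nonneg _
  set g : ℂ → ℂ := fun z => (α : ℂ) - ε * z with hg
  set f1 : ℂ → ℂ := fun z => ((α : ℂ) - 1) + ε * z with hf1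
  have habs : ∀ x : ℝ, ‖g ((x : ℝ) : ℂ)‖ = Real.sqrt (α ^ 2 + x ^ 2) ∧
      ‖f1 ((x : ℝ) : ℂ)‖ = Real.sqrt ((α - 1) ^ 2 + x ^ 2) := by
    intro x
    rw [hg, hf1]
    constructor <;>
    · rw [Complex.norm_def]
      congr 1
      rcases hε with rfl | rfl <;>
        simp [Complex.normSq_apply] <;> ring
  have hspec : ∀ z ∈ spectrum ℂ H, z = ((z.re : ℝ) : ℂ) := fun z hz =>
    hH.mem_spectrum_eq_re hz
  have hx2 : ∀ z ∈ spectrum ℂ H, (z.re) ^ 2 ≤ w ^ 2 := by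
    intro z hz
    have h1 : ‖z‖ ≤ w := (spectrum.norm_le_norm_of_mem hz).trans hw
    rw [hspec z hz] at h1
    rw [Complex.norm_real, Real.norm_eq_abs] at h1
    have := abs_nonneg z.re
    nlinarith [le_abs_self z.re, neg_abs_le z.re]
  have hg0 : ∀ z ∈ spectrum ℂ H, g z ≠ 0 := by
    intro z hz h0
    have h1 := (habs z.re).1
    rw [← hspec z hz] at h1
    rw [h0, norm_zero] at h1
    have h2 : (0:ℝ) < α ^ 2 + z.re ^ 2 := by nlinarith [sq_nonneg z.re]
    have h3 : (0:ℝ) < Real.sqrt (α ^ 2 + z.re ^ 2) := Real.sqrt_pos.mpr h2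
    rw [← h1] at h3
    exact lt_irrefl 0 h3
  have hgcont : ContinuousOn g (spectrum ℂ H) := Continuous.continuousOn (by fun_prop)
  have hginv : ContinuousOn (fun z => (g z)⁻¹) (spectrum ℂ H) := hgcont.inv₀ hg0
  have hf1cont : ContinuousOn f1 (spectrum ℂ H) := Continuous.continuousOn (by fun_prop)
  have hgH : cfc g H = (α : ℂ) • (1 : Matrix (Fin n) (Fin n) ℂ) - ε • H := by
    have h1 : cfc g H = cfc (fun _ => (α : ℂ)) H - cfc (fun z => ε * z) H := by
      rw [← cfc_sub (fun _ => (α : ℂ)) (fun z => ε * z) H]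
    rw [h1, cfc_const _ H, cfc_const_mul_id ε H, Algebra.algebraMap_eq_smul_one]
  have hf1H : cfc f1 H = ((α : ℂ) - 1) • (1 : Matrix (Fin n) (Fin n) ℂ) + ε • H := by
    have h1 : cfc f1 H = cfc (fun _ => (α : ℂ) - 1) H + cfc (fun z => ε * z) H := by
      rw [← cfc_add H (fun _ => (α : ℂ) - 1) (fun z => ε * z)]
    rw [h1, cfc_const _ H, cfc_const_mul_id ε H, Algebra.algebraMap_eq_smul_one]
  have hmul1 : ((α : ℂ) • (1 : Matrix (Fin n) (Fin n) ℂ) - ε • H) *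
      cfc (fun z => (g z)⁻¹) H = 1 := by
    rw [← hgH, ← cfc_mul g (fun z => (g z)⁻¹) H hgcont hginv]
    rw [cfc_congr (g := fun _ => (1 : ℂ)) fun z hz => mul_inv_cancel₀ (hg0 z hz)]
    exact cfc_const_one ℂ H
  have hunit : IsUnit ((α : ℂ) • (1 : Matrix (Fin n) (Fin n) ℂ) - ε • H) := by
    apply Matrix.isUnit_iff_isUnit_det _ |>.mpr
    have := congrArg Matrix.det hmul1
    rw [Matrix.det_mul, Matrix.det_one] at this
    exact IsUnit.of_mul_eq_one _ this
  refine ⟨hunit, ?_⟩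
  rw [Matrix.inv_eq_right_inv hmul1, ← hf1H,
    ← cfc_mul f1 (fun z => (g z)⁻¹) H hf1cont hginv]
  apply norm_cfc_le (Real.sqrt_nonneg _)
  intro z hz
  rw [norm_mul, norm_inv]
  have hzre := hspec z hz
  rw [hzre, (habs z.re).1, (habs z.re).2]
  have hd : (0:ℝ) < α ^ 2 + z.re ^ 2 := by nlinarith [sq_nonneg z.re]
  rw [← Real.sqrt_inv, ← Real.sqrt_mul (by positivity), ← div_eq_mul_inv]
  exact Real.sqrt_le_sqrt (ratio_le hα (hx2 z hz))

end Stmt7Aux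

/-- eigenvalue bound for the Method III iteration matrix
`B = (αT - iW₁)⁻¹ ((α-1)T - iW₂) (αT + iW₂)⁻¹ ((α-1)T + iW₁)`, `α ≥ 1`. -/
theorem stmt_7 {n : ℕ} (W₁ W₂ T : Matrix (Fin n) (Fin n) ℝ)
    (hW₁ : W₁.PosDef) (hW₂ : W₂.PosDef) (hT : T.PosDef)
    (α : ℝ) (hα : 1 ≤ α)
    (B : Matrix (Fin n) (Fin n) ℂ)
    (hB : B = ((α : ℂ) • T.cplx - Complex.I • W₁.cplx)⁻¹ *
      (((α : ℂ) - 1) • T.cplx - Complex.I • W₂.cplx) *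
      ((α : ℂ) • T.cplx + Complex.I • W₂.cplx)⁻¹ *
      (((α : ℂ) - 1) • T.cplx + Complex.I • W₁.cplx)) :
    (∀ lam ∈ spectrum ℂ B,
      ‖lam‖ ≤ Real.sqrt (((α - 1) ^ 2 + ‖T.hatW hT W₂‖ ^ 2) / (α ^ 2 + ‖T.hatW hT W₂‖ ^ 2)) *
        Real.sqrt (((α - 1) ^ 2 + ‖T.hatW hT W₁‖ ^ 2) / (α ^ 2 + ‖T.hatW hT W₁‖ ^ 2))) ∧
    Real.sqrt (((α - 1) ^ 2 + ‖T.hatW hT W₂‖ ^ 2) / (α ^ 2 + ‖T.hatW hT W₂‖ ^ 2)) *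
      Real.sqrt (((α - 1) ^ 2 + ‖T.hatW hT W₁‖ ^ 2) / (α ^ 2 + ‖T.hatW hT W₁‖ ^ 2)) < 1 := by
  refine ⟨?_, Stmt7Aux.bound_lt_one hα⟩
  rcases subsingleton_or_nontrivial (Matrix (Fin n) (Fin n) ℂ) with hsub | hnt
  · intro lam hlam
    rw [spectrum.mem_iff] at hlam
    exact absurd (isUnit_of_subsingleton _) hlam
  -- real-side setup
  set Sr : Matrix (Fin n) (Fin n) ℝ := hT.posSemidef.1.eigenvectorUnitary.1 *
      Matrix.diagonal ((RCLike.ofReal : ℝ → ℝ) ∘ Real.sqrt ∘ hT.posSemidef.1.eigenvalues) *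
      (star hT.posSemidef.1.eigenvectorUnitary : Matrix (Fin n) (Fin n) ℝ) with hSr
  have hSrH : Sr.IsHermitian := by
    have h := Matrix.isHermitian_mul_mul_conjTranspose
      (A := Matrix.diagonal ((RCLike.ofReal : ℝ → ℝ) ∘ Real.sqrt ∘ hT.posSemidef.1.eigenvalues))
      hT.posSemidef.1.eigenvectorUnitary.1 (Matrix.isHermitian_diagonal _)
    rw [hSr]
    exact h
  have hSrsq : Sr * Sr = T := by
    have hU : (star hT.posSemidef.1.eigenvectorUnitary : Matrix (Fin n) (Fin n) ℝ) *
        hT.posSemidef.1.eigenvectorUnitary.1 = 1 := Unitary.coe_star_mul_self _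
    have hD : Matrix.diagonal ((RCLike.ofReal : ℝ → ℝ) ∘ Real.sqrt ∘ hT.posSemidef.1.eigenvalues) *
        Matrix.diagonal ((RCLike.ofReal : ℝ → ℝ) ∘ Real.sqrt ∘ hT.posSemidef.1.eigenvalues) =
        Matrix.diagonal ((RCLike.ofReal : ℝ → ℝ) ∘ hT.posSemidef.1.eigenvalues) := by
      rw [Matrix.diagonal_mul_diagonal]
      congr 1
      funext i
      simp only [Function.comp_apply, RCLike.ofReal_real_eq_id, id]
      exact Real.mul_self_sqrt (hT.eigenvalues_pos i).le
    conv_rhs => rw [hT.posSemidef.1.spectral_theorem, Unitary.conjStarAlgAut_apply]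
    rw [hSr]
    calc _ = hT.posSemidef.1.eigenvectorUnitary.1 *
        (Matrix.diagonal ((RCLike.ofReal : ℝ → ℝ) ∘ Real.sqrt ∘ hT.posSemidef.1.eigenvalues) *
        ((star hT.posSemidef.1.eigenvectorUnitary : Matrix (Fin n) (Fin n) ℝ) *
        hT.posSemidef.1.eigenvectorUnitary.1) *
        Matrix.diagonal ((RCLike.ofReal : ℝ → ℝ) ∘ Real.sqrt ∘ hT.posSemidef.1.eigenvalues)) *
        (star hT.posSemidef.1.eigenvectorUnitary : Matrix (Fin n) (Fin n) ℝ) := by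
          simp only [Matrix.mul_assoc]
      _ = _ := by rw [hU, Matrix.mul_one, hD]
  have hSrdet : IsUnit Sr.det := by
    have h1 : Sr.det * Sr.det = T.det := by rw [← Matrix.det_mul, hSrsq]
    have h2 : (0:ℝ) < T.det := hT.det_pos
    refine isUnit_iff_ne_zero.mpr fun h0 => ?_
    rw [h0, mul_zero] at h1; exact absurd h1.symm (ne_of_gt h2)
  have hSri : Sr * Sr⁻¹ = 1 := Matrix.mul_nonsing_inv _ hSrdet
  have hSril : Sr⁻¹ * Sr = 1 := Matrix.nonsing_inv_mul _ hSrdet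
  have hWconj : ∀ W : Matrix (Fin n) (Fin n) ℝ, Sr * (T.hatW hT W) * Sr = W := by
    intro W
    rw [Matrix.hatW, ← hSr]
    calc Sr * (Sr⁻¹ * W * Sr⁻¹) * Sr = (Sr * Sr⁻¹) * W * (Sr⁻¹ * Sr) := by
          simp only [Matrix.mul_assoc]
      _ = W := by rw [hSri, hSril, Matrix.one_mul, Matrix.mul_one]
  have hhatH : ∀ (W : Matrix (Fin n) (Fin n) ℝ), W.PosDef → (T.hatW hT W).IsHermitian := by
    intro W hW
    rw [Matrix.hatW, ← hSr]
    have h1 : Matrix.conjTranspose Sr⁻¹ = Sr⁻¹ := hSrH.inv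
    have := Matrix.isHermitian_conjTranspose_mul_mul (A := W) Sr⁻¹ hW.1
    rwa [h1] at this
  -- complex-side setup
  set S : Matrix (Fin n) (Fin n) ℂ := Sr.cplx with hS
  set H₁ : Matrix (Fin n) (Fin n) ℂ := (T.hatW hT W₁).cplx with hH₁def
  set H₂ : Matrix (Fin n) (Fin n) ℂ := (T.hatW hT W₂).cplx with hH₂def
  have hSdet : IsUnit S.det := by
    have h1 : S.det = (Sr.det : ℂ) := (RingHom.map_det Complex.ofRealHom Sr).symm
    rw [h1]
    exact isUnit_iff_ne_zero.mpr (by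
      simpa using (isUnit_iff_ne_zero.mp hSrdet))
  have hSi : S * S⁻¹ = 1 := Matrix.mul_nonsing_inv _ hSdet
  have hSil : S⁻¹ * S = 1 := Matrix.nonsing_inv_mul _ hSdet
  have hT2 : T.cplx = S * S := by rw [hS, ← Stmt7Aux.cplx_mul, hSrsq]
  have hW1c : W₁.cplx = S * H₁ * S := by
    rw [hS, hH₁def, ← Stmt7Aux.cplx_mul, ← Stmt7Aux.cplx_mul, hWconj]
  have hW2c : W₂.cplx = S * H₂ * S := by
    rw [hS, hH₂def, ← Stmt7Aux.cplx_mul, ← Stmt7Aux.cplx_mul, hWconj]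
  have hsemiconj : Function.Semiconj (Complex.ofReal) star star := by
    intro r; simp [Complex.conj_ofReal]
  have hH₁ : IsSelfAdjoint H₁ :=
    (Matrix.IsHermitian.map (hhatH W₁ hW₁) _ hsemiconj).isSelfAdjoint
  have hH₂ : IsSelfAdjoint H₂ :=
    (Matrix.IsHermitian.map (hhatH W₂ hW₂) _ hsemiconj).isSelfAdjoint
  -- the four factors
  set N₁ : Matrix (Fin n) (Fin n) ℂ := (α : ℂ) • 1 - Complex.I • H₁ with hN₁
  set A₁ : Matrix (Fin n) (Fin n) ℂ := ((α : ℂ) - 1) • 1 + Complex.I • H₁ with hA₁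
  set N₂ : Matrix (Fin n) (Fin n) ℂ := (α : ℂ) • 1 + Complex.I • H₂ with hN₂
  set A₂ : Matrix (Fin n) (Fin n) ℂ := ((α : ℂ) - 1) • 1 - Complex.I • H₂ with hA₂
  obtain ⟨hu1, hb1⟩ := Stmt7Aux.factor H₁ hH₁ α ‖T.hatW hT W₁‖ hα
    (Stmt7Aux.norm_cplx_le _) Complex.I (Or.inl rfl)
  obtain ⟨hu2', hb2'⟩ := Stmt7Aux.factor H₂ hH₂ α ‖T.hatW hT W₂‖ hα
    (Stmt7Aux.norm_cplx_le _) (-Complex.I) (Or.inr rfl)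
  rw [neg_smul, sub_neg_eq_add] at hu2'
  rw [neg_smul, ← sub_eq_add_neg, sub_neg_eq_add] at hb2'
  have hu2 : IsUnit N₂ := hu2'
  have hb2 : ‖A₂ * N₂⁻¹‖ ≤
      Real.sqrt (((α - 1) ^ 2 + ‖T.hatW hT W₂‖ ^ 2) / (α ^ 2 + ‖T.hatW hT W₂‖ ^ 2)) := hb2'
  -- expansion of the original factors
  have hexp : ∀ (c d : ℂ) (H W : Matrix (Fin n) (Fin n) ℂ), W = S * H * S →
      c • T.cplx + d • W = S * (c • 1 + d • H) * S := by
    intro c d H W hW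
    rw [hW, hT2]
    simp only [Matrix.mul_add, Matrix.add_mul, Matrix.mul_smul, Matrix.smul_mul,
      Matrix.mul_one, Matrix.one_mul, Matrix.mul_assoc]
  have hF1 : (α : ℂ) • T.cplx - Complex.I • W₁.cplx = S * N₁ * S := by
    have := hexp (α : ℂ) (-Complex.I) H₁ W₁.cplx hW1c
    rw [neg_smul, neg_smul, ← sub_eq_add_neg, ← sub_eq_add_neg] at this
    rw [this, hN₁]
  have hF2 : ((α : ℂ) - 1) • T.cplx - Complex.I • W₂.cplx = S * A₂ * S := by
    have := hexp ((α : ℂ) - 1) (-Complex.I) H₂ W₂.cplx hW2c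
    rw [neg_smul, neg_smul, ← sub_eq_add_neg, ← sub_eq_add_neg] at this
    rw [this, hA₂]
  have hF3 : (α : ℂ) • T.cplx + Complex.I • W₂.cplx = S * N₂ * S :=
    hexp (α : ℂ) Complex.I H₂ W₂.cplx hW2c
  have hF4 : ((α : ℂ) - 1) • T.cplx + Complex.I • W₁.cplx = S * A₁ * S :=
    hexp ((α : ℂ) - 1) Complex.I H₁ W₁.cplx hW1c
  -- inverses of N₁, N₂
  have hN₁i : N₁⁻¹ * N₁ = 1 :=
    Matrix.nonsing_inv_mul _ ((Matrix.isUnit_iff_isUnit_det _).mp hu1)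
  have hN₂i : N₂ * N₂⁻¹ = 1 :=
    Matrix.mul_nonsing_inv _ ((Matrix.isUnit_iff_isUnit_det _).mp hu2)
  -- conjugation
  set M : Matrix (Fin n) (Fin n) ℂ := (A₂ * N₂⁻¹) * (A₁ * N₁⁻¹) with hM
  have hBconj : B = (N₁ * S)⁻¹ * M * (N₁ * S) := by
    rw [hB, hF1, hF2, hF3, hF4, hM]
    rw [Matrix.mul_inv_rev (S * N₂) S, Matrix.mul_inv_rev S N₂,
      Matrix.mul_inv_rev (S * N₁) S, Matrix.mul_inv_rev S N₁,
      Matrix.mul_inv_rev N₁ S]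
    have c1 : ∀ X : Matrix (Fin n) (Fin n) ℂ, S⁻¹ * (S * X) = X := fun X => by
      rw [← Matrix.mul_assoc, hSil, Matrix.one_mul]
    have c2 : ∀ X : Matrix (Fin n) (Fin n) ℂ, S * (S⁻¹ * X) = X := fun X => by
      rw [← Matrix.mul_assoc, hSi, Matrix.one_mul]
    have c3 : ∀ X : Matrix (Fin n) (Fin n) ℂ, N₁⁻¹ * (N₁ * X) = X := fun X => by
      rw [← Matrix.mul_assoc, hN₁i, Matrix.one_mul]
    simp only [Matrix.mul_assoc, c1, c2, c3]
  have hUnit : IsUnit (N₁ * S) := hu1.mul ((Matrix.isUnit_iff_isUnit_det _).mpr hSdet)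
  have hspec : spectrum ℂ B = spectrum ℂ M := by
    have heq : (N₁ * S)⁻¹ * M * (N₁ * S) =
        ((hUnit.unit⁻¹ : (Matrix (Fin n) (Fin n) ℂ)ˣ) : Matrix (Fin n) (Fin n) ℂ) * M *
          ((hUnit.unit : (Matrix (Fin n) (Fin n) ℂ)ˣ) : Matrix (Fin n) (Fin n) ℂ) := by
      rw [Matrix.coe_units_inv, hUnit.unit_spec]
    rw [hBconj, heq]
    exact spectrum.units_conjugate'
  intro lam hlam
  rw [hspec] at hlam
  have h1 : ‖lam‖ ≤ ‖M‖ := spectrum.norm_le_norm_of_mem hlam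
  have h2 : ‖M‖ ≤ ‖A₂ * N₂⁻¹‖ * ‖A₁ * N₁⁻¹‖ := Matrix.l2_opNorm_mul _ _
  refine h1.trans (h2.trans ?_)
  exact mul_le_mul hb2 hb1 (norm_nonneg _) (Real.sqrt_nonneg _)
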